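/- Let h₀ : ℝⁿ → ℝ be strictly quasi strongly E-preinvex w.r.t. Ψ on ℝⁿ, let h_j : ℝⁿ → ℝ for j = 1,…,m be quasi strongly E-preinvex w.r.t. Ψ on ℝⁿ, and let X = {s ∈ ℝⁿ : h_j(s) ≤ 0 for all j = 1,…,m} be the feasible set, with E(X) ⊆ X. Suppose s* ∈ E(X) is a local minimum point of the problem of minimizing h₀ over X, i.e., there exists ε > 0 such that h₀(s*) ≤ h₀(t) for every t ∈ X with ‖t − s*‖ < ε. Then s* is a global minimum over E(X): there is no u* ∈ E(X) with u* ≠ s* and h₀(u*) < h₀(s*), i.e., h₀(s*) ≤ h₀(E u) for every u ∈ X. -/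

import Mathlib

def SEISet {n : ℕ} (E : EuclideanSpace ℝ (Fin n) → EuclideanSpace ℝ (Fin n))
    (Ψ : EuclideanSpace ℝ (Fin n) × EuclideanSpace ℝ (Fin n) → EuclideanSpace ℝ (Fin n))
    (S : Set (EuclideanSpace ℝ (Fin n))) : Prop :=
  ∀ s ∈ S, ∀ t ∈ S, ∀ α ∈ Set.Icc (0 : ℝ) 1, ∀ μ ∈ Set.Icc (0 : ℝ) 1,
    α • t + E t + μ • Ψ (α • s + E s, α • t + E t) ∈ S

def QSEP {n : ℕ} (E : EuclideanSpace ℝ (Fin n) → EuclideanSpace ℝ (Fin n))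
    (Ψ : EuclideanSpace ℝ (Fin n) × EuclideanSpace ℝ (Fin n) → EuclideanSpace ℝ (Fin n))
    (S : Set (EuclideanSpace ℝ (Fin n))) (h : EuclideanSpace ℝ (Fin n) → ℝ) : Prop :=
  ∀ s ∈ S, ∀ t ∈ S, ∀ α ∈ Set.Icc (0 : ℝ) 1, ∀ μ ∈ Set.Icc (0 : ℝ) 1,
    h (α • t + E t + μ • Ψ (α • s + E s, α • t + E t)) ≤ max (h (E s)) (h (E t))
/-- Strictly quasi strongly E-preinvex on ℝⁿ: QSEP together with strictness of the
inequality whenever `h (E s) ≠ h (E t)` and `μ ∈ (0,1)`. -/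
def StrictQSEP {n : ℕ} (E : EuclideanSpace ℝ (Fin n) → EuclideanSpace ℝ (Fin n))
    (Ψ : EuclideanSpace ℝ (Fin n) × EuclideanSpace ℝ (Fin n) → EuclideanSpace ℝ (Fin n))
    (h : EuclideanSpace ℝ (Fin n) → ℝ) : Prop :=
  QSEP E Ψ Set.univ h ∧
    ∀ s t : EuclideanSpace ℝ (Fin n), h (E s) ≠ h (E t) →
      ∀ α ∈ Set.Icc (0 : ℝ) 1, ∀ μ ∈ Set.Ioo (0 : ℝ) 1,
        h (α • t + E t + μ • Ψ (α • s + E s, α • t + E t)) < max (h (E s)) (h (E t))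

theorem stmt_12 {n m : ℕ} (E : EuclideanSpace ℝ (Fin n) → EuclideanSpace ℝ (Fin n))
    (Ψ : EuclideanSpace ℝ (Fin n) × EuclideanSpace ℝ (Fin n) → EuclideanSpace ℝ (Fin n))
    (h₀ : EuclideanSpace ℝ (Fin n) → ℝ) (h : Fin m → EuclideanSpace ℝ (Fin n) → ℝ)
    (hQ0 : StrictQSEP E Ψ h₀)
    (hQ : ∀ j, QSEP E Ψ Set.univ (h j))
    (X : Set (EuclideanSpace ℝ (Fin n)))
    (hXdef : X = {s | ∀ j, h j s ≤ 0})
    (hEX : E '' X ⊆ X)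
    (sstar : EuclideanSpace ℝ (Fin n)) (hs : sstar ∈ E '' X)
    (hloc : ∃ ε > (0 : ℝ), ∀ t ∈ X, ‖t - sstar‖ < ε → h₀ sstar ≤ h₀ t) :
    ∀ u ∈ X, h₀ sstar ≤ h₀ (E u) := by
  obtain ⟨x, hxX, hEx⟩ := hs
  obtain ⟨ε, hε, hmin⟩ := hloc
  intro u hu
  by_contra hlt
  push_neg at hlt
  set v := Ψ (E u, E x) with hv
  set μ : ℝ := min (1/2) (ε / (2 * (‖v‖ + 1))) with hμ
  have hvpos : (0:ℝ) < ‖v‖ + 1 := by positivity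
  have hμpos : 0 < μ := lt_min (by norm_num) (by positivity)
  have hμlt1 : μ < 1 := lt_of_le_of_lt (min_le_left _ _) (by norm_num)
  have hEuX : E u ∈ X := hEX ⟨u, hu, rfl⟩
  have hExX : E x ∈ X := hEX ⟨x, hxX, rfl⟩
  set z : EuclideanSpace ℝ (Fin n) :=
    (0:ℝ) • x + E x + μ • Ψ ((0:ℝ) • u + E u, (0:ℝ) • x + E x) with hz
  have hzeq : z = E x + μ • v := by
    simp [hz, hv]
  have hzX : z ∈ X := by
    rw [hXdef]
    intro j
    have := hQ j u (Set.mem_univ _) x (Set.mem_univ _) 0 ⟨le_refl _, zero_le_one⟩ μ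
      ⟨hμpos.le, hμlt1.le⟩
    rw [hXdef] at hEuX hExX
    exact le_trans this (max_le (hEuX j) (hExX j))
  have hnorm : ‖z - sstar‖ < ε := by
    rw [hzeq, ← hEx]
    have : E x + μ • v - E x = μ • v := by abel
    rw [this, norm_smul, Real.norm_eq_abs, abs_of_pos hμpos]
    have h1 : μ ≤ ε / (2 * (‖v‖ + 1)) := min_le_right _ _
    calc μ * ‖v‖ ≤ ε / (2 * (‖v‖ + 1)) * (‖v‖ + 1) := by
          apply mul_le_mul h1 (by linarith) (norm_nonneg _) (by positivity)
      _ = ε / 2 := by field_simp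
      _ < ε := by linarith
  have hne : h₀ (E u) ≠ h₀ (E x) := by rw [hEx]; exact ne_of_lt hlt
  have hstrict := hQ0.2 u x hne 0 ⟨le_refl _, zero_le_one⟩ μ ⟨hμpos, hμlt1⟩
  have hmax : max (h₀ (E u)) (h₀ (E x)) = h₀ sstar := by
    rw [hEx]; exact max_eq_right (by rw [← hEx] at hlt ⊢; exact hlt.le)
  rw [hmax] at hstrict
  exact absurd (hmin z hzX hnorm) (not_le.mpr hstrict)
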